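/- arXiv:1309.2109 — 2 statements merged into one kernel-verified Lean document; each statement's English description precedes it below -/
import Mathlib

section
/- For all m ≥ 0 and all x, the Bernoulli polynomials satisfy B_m(x) = ∑_{n=0}^{m} D_n(x) S(m,n), where D_n(x) are the Daehee polynomials and S(m,n) are the Stirling numbers of the second kind. -/
open PowerSeries Finset

noncomputable def logOneAdd : PowerSeries ℚ :=
  PowerSeries.mk fun k => if k = 0 then 0 else (-1 : ℚ)^(k+1) / k

noncomputable def onePow (x : ℚ) : PowerSeries ℚ :=
  PowerSeries.mk fun k => (∏ i ∈ Finset.range k, (x - (i : ℚ))) / (Nat.factorial k : ℚ)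

noncomputable def expX (x : ℚ) : PowerSeries ℚ :=
  PowerSeries.mk fun k => x ^ k / (Nat.factorial k : ℚ)

noncomputable def EE : PowerSeries ℚ := PowerSeries.exp ℚ - 1

lemma coeff_EE (k : ℕ) :
    PowerSeries.coeff (R := ℚ) k EE = if k = 0 then 0 else 1 / (Nat.factorial k : ℚ) := by
  simp only [EE, map_sub, PowerSeries.coeff_exp, PowerSeries.coeff_one]
  rcases eq_or_ne k 0 with h | h <;> simp [h]

lemma coeff_EE_pow_eq_zero : ∀ {m n : ℕ}, m < n → PowerSeries.coeff (R := ℚ) m (EE ^ n) = 0 := by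
  intro m n
  induction n generalizing m with
  | zero => omega
  | succ n ih =>
    intro h
    rw [pow_succ, PowerSeries.coeff_mul]
    apply Finset.sum_eq_zero
    intro p hp
    rw [Finset.HasAntidiagonal.mem_antidiagonal] at hp
    rcases lt_or_ge p.1 n with h1 | h1
    · rw [ih h1, zero_mul]
    · have h2 : p.2 = 0 := by omega
      rw [h2, coeff_EE]
      simp

lemma coeff_aeval (P : Polynomial ℚ) (m : ℕ) :
    PowerSeries.coeff (R := ℚ) m (Polynomial.aeval EE P) =
      ∑ n ∈ Finset.range (m + 1), P.coeff n * PowerSeries.coeff (R := ℚ) m (EE ^ n) := by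
  set N := max (P.natDegree + 1) (m + 1) with hN
  rw [Polynomial.aeval_eq_sum_range' (n := N) (by omega) EE, map_sum]
  have : ∀ n ∈ Finset.range N,
      PowerSeries.coeff (R := ℚ) m (P.coeff n • EE ^ n) = P.coeff n * PowerSeries.coeff (R := ℚ) m (EE ^ n) := by
    intro n _; rw [PowerSeries.coeff_smul, smul_eq_mul]
  rw [Finset.sum_congr rfl this]
  symm
  apply Finset.sum_subset (Finset.range_subset_range.mpr (by omega))
  intro n _ hn
  rw [Finset.mem_range, not_lt] at hn
  rw [coeff_EE_pow_eq_zero (by omega), mul_zero]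

/-- Substitution of `exp - 1` into a power series. -/
noncomputable def pcomp (f : PowerSeries ℚ) : PowerSeries ℚ :=
  PowerSeries.mk fun m => ∑ n ∈ Finset.range (m + 1),
    PowerSeries.coeff (R := ℚ) n f * PowerSeries.coeff (R := ℚ) m (EE ^ n)

lemma coeff_pcomp (f : PowerSeries ℚ) (m : ℕ) :
    PowerSeries.coeff (R := ℚ) m (pcomp f) = ∑ n ∈ Finset.range (m + 1),
      PowerSeries.coeff (R := ℚ) n f * PowerSeries.coeff (R := ℚ) m (EE ^ n) := by
  simp [pcomp]

lemma coeff_pcomp_eq_aeval_trunc (f : PowerSeries ℚ) {m N : ℕ} (h : m < N) :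
    PowerSeries.coeff (R := ℚ) m (pcomp f) = PowerSeries.coeff (R := ℚ) m (Polynomial.aeval EE (f.trunc N)) := by
  rw [coeff_pcomp, coeff_aeval]
  apply Finset.sum_congr rfl
  intro n hn
  rw [Finset.mem_range] at hn
  rw [PowerSeries.coeff_trunc, if_pos (by omega)]

lemma pcomp_add (f g : PowerSeries ℚ) : pcomp (f + g) = pcomp f + pcomp g := by
  ext m
  simp only [coeff_pcomp, map_add, add_mul, Finset.sum_add_distrib]

lemma pcomp_C (c : ℚ) : pcomp (PowerSeries.C (R := ℚ) c) = PowerSeries.C (R := ℚ) c := by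
  ext m
  rw [coeff_pcomp]
  rcases eq_or_ne m 0 with h | h
  · subst h; simp
  · rw [PowerSeries.coeff_C, if_neg h]
    apply Finset.sum_eq_zero
    intro n hn
    rcases eq_or_ne n 0 with h0 | h0
    · subst h0; simp [PowerSeries.coeff_C, h]
    · simp [PowerSeries.coeff_C, h0]

lemma pcomp_one : pcomp 1 = 1 := by
  have := pcomp_C 1; simpa using this

lemma pcomp_X : pcomp PowerSeries.X = EE := by
  ext m
  rw [coeff_pcomp]
  rcases eq_or_ne m 0 with h | h
  · subst h; simp [coeff_EE]
  · have h1 : 1 < m + 1 := by omega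
    rw [Finset.sum_eq_single 1]
    · simp
    · intro n _ hn
      simp [PowerSeries.coeff_X, hn]
    · intro hh; exact absurd (Finset.mem_range.mpr h1) hh

lemma pcomp_mul (f g : PowerSeries ℚ) : pcomp (f * g) = pcomp f * pcomp g := by
  ext m
  set N := m + 1 with hNdef
  have key : PowerSeries.coeff (R := ℚ) m (pcomp (f * g)) =
      PowerSeries.coeff (R := ℚ) m (Polynomial.aeval EE (f.trunc N * g.trunc N)) := by
    rw [coeff_pcomp, coeff_aeval]
    apply Finset.sum_congr rfl
    intro n hn
    rw [Finset.mem_range] at hn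
    congr 1
    rw [Polynomial.coeff_mul, PowerSeries.coeff_mul]
    apply Finset.sum_congr rfl
    intro p hp
    rw [Finset.HasAntidiagonal.mem_antidiagonal] at hp
    rw [PowerSeries.coeff_trunc, PowerSeries.coeff_trunc, if_pos (by omega), if_pos (by omega)]
  rw [key, map_mul, PowerSeries.coeff_mul, PowerSeries.coeff_mul]
  apply Finset.sum_congr rfl
  intro p hp
  rw [Finset.HasAntidiagonal.mem_antidiagonal] at hp
  rw [← coeff_pcomp_eq_aeval_trunc f (show p.1 < N by omega),
    ← coeff_pcomp_eq_aeval_trunc g (show p.2 < N by omega)]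

lemma derivative_exp' : d⁄dX ℚ (PowerSeries.exp ℚ) = PowerSeries.exp ℚ := by
  ext m
  rw [PowerSeries.coeff_derivative, PowerSeries.coeff_exp, PowerSeries.coeff_exp]
  have h1 : ((m + 1).factorial : ℚ) = (m.factorial : ℚ) * (m + 1) := by
    rw [Nat.factorial_succ]; push_cast; ring
  have h2 : (m.factorial : ℚ) ≠ 0 := Nat.cast_ne_zero.mpr (Nat.factorial_ne_zero m)
  have h3 : ((m : ℚ) + 1) ≠ 0 := by positivity
  push_cast [h1]
  field_simp

lemma derivative_EE : d⁄dX ℚ EE = PowerSeries.exp ℚ := by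
  rw [EE, map_sub, derivative_exp']
  simp

lemma exp_eq_pcomp_one_add : PowerSeries.exp ℚ = pcomp (1 + PowerSeries.X) := by
  rw [pcomp_add, pcomp_one, pcomp_X, EE]; ring

-- chain rule
lemma derivative_pcomp (f : PowerSeries ℚ) :
    d⁄dX ℚ (pcomp f) = pcomp (d⁄dX ℚ f) * PowerSeries.exp ℚ := by
  ext m
  rw [PowerSeries.coeff_derivative, coeff_pcomp]
  have hD : ∀ n : ℕ, PowerSeries.coeff (R := ℚ) (m + 1) (EE ^ n) * ((m : ℚ) + 1) =
      (n : ℚ) * PowerSeries.coeff (R := ℚ) m (EE ^ (n - 1) * PowerSeries.exp ℚ) := by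
    intro n
    have h1 := PowerSeries.coeff_derivative (EE ^ n) m
    rw [Derivation.leibniz_pow, derivative_EE] at h1
    rw [map_nsmul, smul_eq_mul, nsmul_eq_mul] at h1
    push_cast at h1 ⊢
    rw [← h1]
  rw [Finset.sum_mul]
  have congr1 : ∀ n ∈ Finset.range (m + 1 + 1),
      PowerSeries.coeff (R := ℚ) n f * PowerSeries.coeff (R := ℚ) (m+1) (EE ^ n) * ((m : ℚ) + 1) =
      PowerSeries.coeff (R := ℚ) n f *
        ((n : ℚ) * PowerSeries.coeff (R := ℚ) m (EE ^ (n - 1) * PowerSeries.exp ℚ)) := by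
    intro n _
    rw [mul_assoc, hD n]
  rw [Finset.sum_congr rfl congr1, Finset.sum_range_succ']
  simp only [Nat.cast_zero, zero_mul, mul_zero, add_zero, Nat.add_sub_cancel]
  rw [PowerSeries.coeff_mul]
  have congr2 : ∀ p ∈ Finset.HasAntidiagonal.antidiagonal m,
      PowerSeries.coeff (R := ℚ) p.1 (pcomp (d⁄dX ℚ f)) * PowerSeries.coeff (R := ℚ) p.2 (PowerSeries.exp ℚ) =
      ∑ k ∈ Finset.range (m + 1), (PowerSeries.coeff (R := ℚ) (k+1) f * ((k : ℚ)+1)) *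
        (PowerSeries.coeff (R := ℚ) p.1 (EE ^ k) * PowerSeries.coeff (R := ℚ) p.2 (PowerSeries.exp ℚ)) := by
    intro p hp
    rw [Finset.HasAntidiagonal.mem_antidiagonal] at hp
    rw [coeff_pcomp]
    have ext1 : ∑ n ∈ Finset.range (p.1 + 1),
        PowerSeries.coeff (R := ℚ) n (d⁄dX ℚ f) * PowerSeries.coeff (R := ℚ) p.1 (EE ^ n) =
        ∑ n ∈ Finset.range (m + 1),
        PowerSeries.coeff (R := ℚ) n (d⁄dX ℚ f) * PowerSeries.coeff (R := ℚ) p.1 (EE ^ n) := by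
      apply Finset.sum_subset (Finset.range_subset_range.mpr (by omega))
      intro n _ hn
      rw [Finset.mem_range, not_lt] at hn
      rw [coeff_EE_pow_eq_zero (by omega), mul_zero]
    rw [ext1, Finset.sum_mul]
    apply Finset.sum_congr rfl
    intro k _
    rw [PowerSeries.coeff_derivative]
    ring
  rw [Finset.sum_congr rfl congr2, Finset.sum_comm]
  apply Finset.sum_congr rfl
  intro k _
  rw [← Finset.mul_sum, ← PowerSeries.coeff_mul]
  push_cast
  ring

lemma pcomp_logOneAdd : pcomp logOneAdd = PowerSeries.X := by
  have hdL : d⁄dX ℚ logOneAdd * (1 + PowerSeries.X) = 1 := by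
    ext m
    rw [mul_add, mul_one, map_add]
    have hc : ∀ k : ℕ, PowerSeries.coeff (R := ℚ) k (d⁄dX ℚ logOneAdd) = (-1 : ℚ) ^ k := by
      intro k
      rw [PowerSeries.coeff_derivative, logOneAdd, PowerSeries.coeff_mk, if_neg (Nat.succ_ne_zero k)]
      have h3 : ((k : ℚ) + 1) ≠ 0 := by positivity
      push_cast
      field_simp
      ring
    cases m with
    | zero => rw [PowerSeries.coeff_zero_mul_X, hc]; simp
    | succ k =>
      rw [PowerSeries.coeff_succ_mul_X, hc, hc, PowerSeries.coeff_one, if_neg (Nat.succ_ne_zero k)]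
      rw [pow_succ]
      ring
  have hQ : d⁄dX ℚ (pcomp logOneAdd) = 1 := by
    rw [derivative_pcomp, exp_eq_pcomp_one_add, ← pcomp_mul, hdL, pcomp_one]
  ext m
  cases m with
  | zero =>
    rw [coeff_pcomp]
    simp [logOneAdd, PowerSeries.coeff_X]
  | succ k =>
    have h3 : ((k : ℚ) + 1) ≠ 0 := by positivity
    apply mul_right_cancel₀ h3
    rw [← PowerSeries.coeff_derivative, ← PowerSeries.coeff_derivative, hQ,
      PowerSeries.derivative_X]

lemma pcomp_onePow (x : ℚ) : pcomp (onePow x) = expX x := by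
  have hstep : ∀ m : ℕ, PowerSeries.coeff (R := ℚ) (m+1) (onePow x) * ((m : ℚ) + 1) =
      (x - m) * PowerSeries.coeff (R := ℚ) m (onePow x) := by
    intro m
    rw [onePow, PowerSeries.coeff_mk, PowerSeries.coeff_mk, Finset.prod_range_succ,
      Nat.factorial_succ]
    have h2 : (m.factorial : ℚ) ≠ 0 := Nat.cast_ne_zero.mpr (Nat.factorial_ne_zero m)
    have h3 : ((m : ℚ) + 1) ≠ 0 := by positivity
    push_cast
    field_simp
  have hdP : d⁄dX ℚ (onePow x) * (1 + PowerSeries.X) = PowerSeries.C (R := ℚ) x * onePow x := by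
    ext m
    rw [mul_add, mul_one, map_add, PowerSeries.coeff_C_mul, PowerSeries.coeff_derivative]
    cases m with
    | zero =>
      rw [PowerSeries.coeff_zero_mul_X]
      have := hstep 0
      push_cast at this ⊢
      rw [this]
      ring
    | succ k =>
      rw [PowerSeries.coeff_succ_mul_X, PowerSeries.coeff_derivative]
      have h1 := hstep (k + 1)
      have h2 := hstep k
      push_cast at h1 h2 ⊢
      rw [h1]
      nlinarith [h2]
  have hQ : d⁄dX ℚ (pcomp (onePow x)) = PowerSeries.C (R := ℚ) x * pcomp (onePow x) := by
    rw [derivative_pcomp, exp_eq_pcomp_one_add, ← pcomp_mul, hdP, pcomp_mul, pcomp_C]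
  ext m
  rw [expX, PowerSeries.coeff_mk]
  induction m with
  | zero =>
    rw [coeff_pcomp]
    simp [onePow]
  | succ k ih =>
    have h3 : ((k : ℚ) + 1) ≠ 0 := by positivity
    apply mul_right_cancel₀ h3
    rw [← PowerSeries.coeff_derivative, hQ, PowerSeries.coeff_C_mul, ih]
    have h2 : (k.factorial : ℚ) ≠ 0 := Nat.cast_ne_zero.mpr (Nat.factorial_ne_zero k)
    rw [Nat.factorial_succ]
    push_cast
    field_simp
    ring

lemma EE_ne_zero : EE ≠ 0 := by
  intro h
  have := coeff_EE 1
  rw [h] at this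
  simp at this

theorem bernoulli_poly_daehee_stirling2 (Dp Bp : ℕ → ℚ → ℚ) (S : ℕ → ℕ → ℚ)
    (hDp : ∀ x : ℚ, PowerSeries.mk (fun n => Dp n x / (Nat.factorial n : ℚ)) * PowerSeries.X = logOneAdd * onePow x) (hBp : ∀ x : ℚ, PowerSeries.mk (fun m => Bp m x / (Nat.factorial m : ℚ)) * (PowerSeries.exp ℚ - 1) = PowerSeries.X * expX x) (hS : ∀ n : ℕ, (PowerSeries.exp ℚ - 1) ^ n = PowerSeries.C (R := ℚ) (Nat.factorial n : ℚ) * PowerSeries.mk (fun m => S m n / (Nat.factorial m : ℚ))) :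
    ∀ (m : ℕ) (x : ℚ), Bp m x = ∑ n ∈ Finset.range (m + 1), Dp n x * S m n := by
  intro m x
  have hF : pcomp (PowerSeries.mk (fun n => Dp n x / (Nat.factorial n : ℚ))) * EE =
      PowerSeries.X * expX x := by
    have := congrArg pcomp (hDp x)
    rw [pcomp_mul, pcomp_mul, pcomp_X, pcomp_logOneAdd, pcomp_onePow] at this
    exact this
  have hB : PowerSeries.mk (fun m => Bp m x / (Nat.factorial m : ℚ)) * EE =
      PowerSeries.X * expX x := hBp x
  have hEq : pcomp (PowerSeries.mk (fun n => Dp n x / (Nat.factorial n : ℚ))) =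
      PowerSeries.mk (fun m => Bp m x / (Nat.factorial m : ℚ)) :=
    mul_right_cancel₀ EE_ne_zero (hF.trans hB.symm)
  have hcoeff := congrArg (PowerSeries.coeff (R := ℚ) m) hEq
  rw [coeff_pcomp] at hcoeff
  simp only [PowerSeries.coeff_mk] at hcoeff
  have hterm : ∀ n ∈ Finset.range (m + 1),
      Dp n x / (Nat.factorial n : ℚ) * PowerSeries.coeff (R := ℚ) m (EE ^ n) =
      Dp n x * S m n / (Nat.factorial m : ℚ) := by
    intro n _
    have hEEn : EE ^ n = PowerSeries.C (R := ℚ) (Nat.factorial n : ℚ) *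
        PowerSeries.mk (fun m => S m n / (Nat.factorial m : ℚ)) := hS n
    rw [hEEn, PowerSeries.coeff_C_mul, PowerSeries.coeff_mk]
    have h2 : ((Nat.factorial n : ℚ)) ≠ 0 := Nat.cast_ne_zero.mpr (Nat.factorial_ne_zero n)
    field_simp
  rw [Finset.sum_congr rfl hterm, ← Finset.sum_div] at hcoeff
  have hmf : ((Nat.factorial m : ℚ)) ≠ 0 := Nat.cast_ne_zero.mpr (Nat.factorial_ne_zero m)
  field_simp at hcoeff
  linarith [hcoeff]
end

section
/- For all n ≥ 0 and all x, the Daehee polynomial of the second kind satisfies Ď_n(x) = B_n^{(n+2)}(2-x), where B_n^{(α)} is the Bernoulli polynomial of order α. -/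
open PowerSeries Finset

namespace DaeheeAux

noncomputable def V : PowerSeries ℚ := PowerSeries.mk fun k => (-1 : ℚ)^k / (k+1)

lemma coeff_V (k : ℕ) : PowerSeries.coeff k V = (-1 : ℚ)^k / (k+1) := coeff_mk _ _

lemma L_eq : logOneAdd = PowerSeries.X * V := by
  ext k
  cases k with
  | zero => simp [logOneAdd, V, coeff_mk]
  | succ k =>
      rw [coeff_succ_X_mul, logOneAdd, coeff_mk, coeff_V]
      simp only [Nat.succ_ne_zero, if_false]
      rw [pow_succ, pow_succ]
      push_cast
      ring

lemma constantCoeff_V : PowerSeries.constantCoeff V = 1 := by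
  simp [V, ← coeff_zero_eq_constantCoeff, coeff_mk]

lemma constantCoeff_Vpow (a : ℕ) : PowerSeries.constantCoeff (V ^ a) = 1 := by
  rw [map_pow, constantCoeff_V, one_pow]

lemma Vpow_mul_inv (a : ℕ) : V ^ a * (V ^ a)⁻¹ = 1 :=
  PowerSeries.mul_inv_cancel _ (by rw [constantCoeff_Vpow]; norm_num)

lemma Vpow_ne_zero (a : ℕ) : (V : PowerSeries ℚ) ^ a ≠ 0 := fun h => by
  have := constantCoeff_Vpow a; rw [h] at this; simp at this

lemma Vcancel (a b : ℕ) : V ^ a * (V ^ (a + b))⁻¹ = (V ^ b)⁻¹ := by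
  apply mul_left_cancel₀ (Vpow_ne_zero (a + b))
  calc V ^ (a+b) * (V ^ a * (V ^ (a+b))⁻¹) = V ^ a * (V ^ (a+b) * (V ^ (a+b))⁻¹) := by ring
  _ = V ^ a := by rw [Vpow_mul_inv, mul_one]
  _ = V ^ (a+b) * (V ^ b)⁻¹ := by
      rw [pow_add, mul_assoc, Vpow_mul_inv, mul_one]

lemma Vsucc_cancel (a : ℕ) : V ^ (a+1) * (V ^ a)⁻¹ = V := by
  apply mul_left_cancel₀ (Vpow_ne_zero a)
  calc V ^ a * (V ^ (a+1) * (V ^ a)⁻¹) = V ^ (a+1) * (V ^ a * (V ^ a)⁻¹) := by ring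
  _ = V ^ (a+1) := by rw [Vpow_mul_inv, mul_one]
  _ = V ^ a * V := by rw [pow_succ]

lemma descPoch_eval (x : ℚ) (k : ℕ) :
    (descPochhammer ℤ k).smeval x = ∏ i ∈ Finset.range k, (x - (i : ℚ)) := by
  induction k with
  | zero => simp [descPochhammer_zero]
  | succ k ih =>
      rw [descPochhammer_succ_right, Polynomial.smeval_mul, ih, Finset.prod_range_succ]
      congr 1
      rw [Polynomial.smeval_sub, Polynomial.smeval_X, Polynomial.smeval_natCast]
      simp

lemma coeff_onePow (x : ℚ) (k : ℕ) :
    PowerSeries.coeff k (onePow x) = Ring.choose x k := by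
  rw [onePow, coeff_mk, ← descPoch_eval, Ring.descPochhammer_eq_factorial_smul_choose]
  rw [nsmul_eq_mul]
  field_simp

lemma onePow_add (a b : ℚ) : onePow a * onePow b = onePow (a + b) := by
  ext k
  rw [coeff_onePow, PowerSeries.coeff_mul, Ring.add_choose_eq k (Commute.all a b)]
  exact Finset.sum_congr rfl fun p _ => by rw [coeff_onePow, coeff_onePow]

lemma onePow_zero : onePow 0 = 1 := by
  ext k
  rw [coeff_onePow, PowerSeries.coeff_one]
  cases k with
  | zero => simp [Ring.choose_zero_right]
  | succ k =>
      rw [show ((0:ℚ)) = ((0:ℕ):ℚ) by norm_num, Ring.choose_natCast]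
      simp

lemma onePow_one : onePow 1 = 1 + PowerSeries.X := by
  ext k
  rw [coeff_onePow, map_add, PowerSeries.coeff_one, PowerSeries.coeff_X,
    show ((1:ℚ)) = ((1:ℕ):ℚ) by norm_num, Ring.choose_natCast]
  match k with
  | 0 => simp
  | 1 => simp
  | (k+2) => simp [Nat.choose_eq_zero_of_lt]

lemma expX_eq_rescale (a : ℚ) : expX a = PowerSeries.rescale a (PowerSeries.exp ℚ) := by
  ext k
  rw [expX, coeff_mk, PowerSeries.coeff_rescale, PowerSeries.coeff_exp]
  simp [div_eq_mul_inv, mul_comm]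

lemma expX_add (a b : ℚ) : expX a * expX b = expX (a + b) := by
  rw [expX_eq_rescale, expX_eq_rescale, expX_eq_rescale]
  exact PowerSeries.exp_mul_exp_eq_exp_add a b

lemma expX_one : expX 1 = PowerSeries.exp ℚ := by
  rw [expX_eq_rescale, PowerSeries.rescale_one]
  simp

lemma expX_nat (j : ℕ) : expX (j : ℚ) = (PowerSeries.exp ℚ) ^ j := by
  induction j with
  | zero =>
      ext k
      rw [expX, coeff_mk]
      simp [PowerSeries.coeff_one, pow_zero]
      split <;> simp_all [pow_succ]
  | succ j ih => rw [pow_succ, ← ih, ← expX_one, expX_add]; push_cast; ring_nf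

lemma prod_neg_one (k : ℕ) : (∏ i ∈ Finset.range k, ((-1 : ℚ) - i)) = (-1)^k * (Nat.factorial k) := by
  induction k with
  | zero => simp
  | succ k ih =>
      rw [Finset.prod_range_succ, ih, Nat.factorial_succ, pow_succ]
      push_cast
      ring

lemma dL_eq : d⁄dX ℚ logOneAdd = onePow (-1) := by
  ext k
  rw [PowerSeries.coeff_derivative, logOneAdd, coeff_mk, onePow, coeff_mk, prod_neg_one]
  simp only [Nat.succ_ne_zero, if_false]
  have h1 : ((k:ℚ) + 1) ≠ 0 := by positivity
  have h2 : ((Nat.factorial k : ℚ)) ≠ 0 := by exact_mod_cast Nat.factorial_ne_zero k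
  push_cast
  field_simp
  ring

lemma dL_V : d⁄dX ℚ logOneAdd = V + PowerSeries.X * d⁄dX ℚ V := by
  rw [L_eq, Derivation.leibniz]
  rw [smul_eq_mul, smul_eq_mul, PowerSeries.derivative_X, mul_one]
  ring

lemma key (r : ℕ) : PowerSeries.coeff r (d⁄dX ℚ logOneAdd * (V ^ (r+1))⁻¹)
    = if r = 0 then 1 else 0 := by
  have hsplit : d⁄dX ℚ logOneAdd * (V ^ (r+1))⁻¹
      = (V ^ r)⁻¹ + PowerSeries.X * (d⁄dX ℚ V * (V ^ (r+1))⁻¹) := by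
    rw [dL_V, add_mul]
    congr 1
    · have := Vcancel 1 r
      rw [pow_one] at this
      rw [← this]; ring_nf
    · ring
  rw [hsplit]
  cases r with
  | zero =>
      rw [map_add, pow_zero]
      rw [PowerSeries.coeff_zero_eq_constantCoeff]
      simp [inv_one]
  | succ s =>
      set r := s + 1
      have hH : PowerSeries.X * d⁄dX ℚ ((V ^ r)⁻¹)
          = -((r : ℚ⟦X⟧)) * (PowerSeries.X * (d⁄dX ℚ V * (V ^ (r+1))⁻¹)) := by
        rw [PowerSeries.derivative_inv']
        have hpow : d⁄dX ℚ (V ^ r) = (r : ℕ) • V ^ (r-1) • d⁄dX ℚ V :=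
          Derivation.leibniz_pow _ _ r
        rw [hpow]
        have hv : V ^ (r-1) * ((V ^ r)⁻¹)^2 = (V ^ (r+1))⁻¹ := by
          apply mul_left_cancel₀ (Vpow_ne_zero (r+1))
          have h2r : V ^ (r+1) * V ^ (r-1) = (V ^ r)^2 := by
            rw [← pow_add, ← pow_mul]
            congr 1
            omega
          calc V ^ (r+1) * (V ^ (r-1) * ((V ^ r)⁻¹)^2)
              = (V ^ (r+1) * V ^ (r-1)) * ((V ^ r)⁻¹)^2 := by ring
            _ = (V ^ r * (V ^ r)⁻¹)^2 := by rw [h2r]; ring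
            _ = 1 := by rw [Vpow_mul_inv]; norm_num
            _ = V ^ (r+1) * (V ^ (r+1))⁻¹ := (Vpow_mul_inv (r+1)).symm
        rw [nsmul_eq_mul, smul_eq_mul]
        calc PowerSeries.X * (-(V ^ r)⁻¹ ^ 2 * ((r:ℚ⟦X⟧) * (V ^ (r-1) * d⁄dX ℚ V)))
            = -(r:ℚ⟦X⟧) * (V ^ (r-1) * ((V^r)⁻¹)^2) * (PowerSeries.X * d⁄dX ℚ V) := by ring
          _ = -(r:ℚ⟦X⟧) * (V ^ (r+1))⁻¹ * (PowerSeries.X * d⁄dX ℚ V) := by rw [hv]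
          _ = -((r : ℚ⟦X⟧)) * (PowerSeries.X * (d⁄dX ℚ V * (V ^ (r+1))⁻¹)) := by ring
      have hr0 : ((r : ℚ)) ≠ 0 := by positivity
      have hT : PowerSeries.coeff r (PowerSeries.X * (d⁄dX ℚ V * (V ^ (r+1))⁻¹))
          = -(1/(r:ℚ)) * PowerSeries.coeff r (PowerSeries.X * d⁄dX ℚ ((V ^ r)⁻¹)) := by
        have hcoeff : PowerSeries.coeff r (PowerSeries.X * d⁄dX ℚ ((V ^ r)⁻¹))
            = -(r:ℚ) * PowerSeries.coeff r (PowerSeries.X * (d⁄dX ℚ V * (V ^ (r+1))⁻¹)) := by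
          rw [hH]
          have hc : ((-(r:ℚ⟦X⟧))) = PowerSeries.C (-(r : ℚ)) := by simp
          rw [hc, PowerSeries.coeff_C_mul]
        rw [hcoeff]
        field_simp
      rw [map_add, hT]
      have h1 : PowerSeries.coeff r (PowerSeries.X * d⁄dX ℚ ((V ^ r)⁻¹))
          = PowerSeries.coeff r ((V^r)⁻¹) * r := by
        show PowerSeries.coeff (s+1) _ = _
        rw [PowerSeries.coeff_succ_X_mul, PowerSeries.coeff_derivative]
        norm_cast
      rw [h1]
      have : ¬ (r = 0) := by omega
      rw [if_neg this]
      set c := PowerSeries.coeff r ((V^r)⁻¹) with hc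
      have : -(1/(r:ℚ)) * (c * r) = -c := by
        field_simp
      rw [this]
      ring

/-- substitution of `logOneAdd` into the degree-`<N` truncation. -/
noncomputable def cp (N : ℕ) (A : ℚ⟦X⟧) : ℚ⟦X⟧ :=
  Polynomial.aeval logOneAdd (PowerSeries.trunc N A)

lemma X_pow_dvd_L_pow (k : ℕ) : (PowerSeries.X : ℚ⟦X⟧)^k ∣ logOneAdd ^ k := by
  rw [L_eq, mul_pow]
  exact Dvd.intro _ rfl

lemma X_pow_dvd_L_pow' {N k : ℕ} (h : N ≤ k) : (PowerSeries.X : ℚ⟦X⟧)^N ∣ logOneAdd ^ k :=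
  dvd_trans (pow_dvd_pow _ h) (X_pow_dvd_L_pow k)

lemma cp_sum (N : ℕ) (A : ℚ⟦X⟧) :
    cp N A = ∑ k ∈ Finset.range N, (PowerSeries.coeff k A) • logOneAdd ^ k := by
  rw [cp, PowerSeries.trunc_apply, map_sum]
  rw [Finset.range_eq_Ico]
  refine Finset.sum_congr rfl fun k _ => ?_
  rw [Polynomial.aeval_monomial, Algebra.smul_def]

lemma cp_dvd_poly (N : ℕ) (p : Polynomial ℚ) :
    (PowerSeries.X : ℚ⟦X⟧)^N ∣ Polynomial.aeval logOneAdd p - cp N (p : ℚ⟦X⟧) := by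
  have hdiff : ∀ d, d < N → (p - PowerSeries.trunc N (p : ℚ⟦X⟧)).coeff d = 0 := by
    intro d hd
    rw [Polynomial.coeff_sub, PowerSeries.coeff_trunc, if_pos hd, Polynomial.coeff_coe, sub_self]
  have hdvd : (Polynomial.X : Polynomial ℚ)^N ∣ p - PowerSeries.trunc N (p : ℚ⟦X⟧) :=
    Polynomial.X_pow_dvd_iff.mpr hdiff
  obtain ⟨q, hq⟩ := hdvd
  have : Polynomial.aeval logOneAdd p - cp N (p : ℚ⟦X⟧)
      = logOneAdd ^ N * Polynomial.aeval logOneAdd q := by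
    rw [cp, ← map_sub, hq, map_mul, map_pow, Polynomial.aeval_X]
  rw [this]
  exact Dvd.dvd.mul_right (X_pow_dvd_L_pow N) _

lemma cp_mul (N : ℕ) (A B : ℚ⟦X⟧) :
    (PowerSeries.X : ℚ⟦X⟧)^N ∣ cp N (A * B) - cp N A * cp N B := by
  have h1 : cp N A * cp N B = Polynomial.aeval logOneAdd (PowerSeries.trunc N A * PowerSeries.trunc N B) := by
    rw [map_mul]; rfl
  have h2 : cp N ((PowerSeries.trunc N A * PowerSeries.trunc N B : Polynomial ℚ) : ℚ⟦X⟧) = cp N (A * B) := by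
    unfold cp
    congr 1
    rw [← PowerSeries.trunc_trunc_mul_trunc]
    push_cast
    rfl
  have := cp_dvd_poly N (PowerSeries.trunc N A * PowerSeries.trunc N B)
  rw [h2, ← h1] at this
  exact dvd_sub_comm.mp this

lemma cp_pow (N : ℕ) (A : ℚ⟦X⟧) (m : ℕ) :
    (PowerSeries.X : ℚ⟦X⟧)^N ∣ cp N (A ^ m) - (cp N A) ^ m := by
  induction m with
  | zero =>
      simp only [pow_zero]
      have h := cp_dvd_poly N 1
      rw [map_one, Polynomial.coe_one] at h
      exact dvd_sub_comm.mp h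
  | succ m ih =>
      have h1 := cp_mul N (A ^ m) A
      have : cp N (A ^ (m+1)) - (cp N A)^(m+1)
          = (cp N (A ^ m * A) - cp N (A ^ m) * cp N A)
            + (cp N (A ^ m) - (cp N A)^m) * cp N A := by
        rw [pow_succ, pow_succ]; ring
      rw [this]
      exact dvd_add h1 (Dvd.dvd.mul_right ih _)

lemma cp_one (N : ℕ) (h : 1 ≤ N) : cp N (1 : ℚ⟦X⟧) = 1 := by
  obtain ⟨M, rfl⟩ := Nat.exists_eq_add_of_le h
  rw [cp, show 1 + M = M + 1 by ring, PowerSeries.trunc_one, map_one]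

lemma cp_X (N : ℕ) (h : 2 ≤ N) : cp N (PowerSeries.X : ℚ⟦X⟧) = logOneAdd := by
  rw [cp, PowerSeries.trunc_X_of h, Polynomial.aeval_X]

lemma cp_add (N : ℕ) (A B : ℚ⟦X⟧) : cp N (A + B) = cp N A + cp N B := by
  rw [cp, cp, cp, map_add, map_add]

lemma one_add_X_mul_dL : (1 + PowerSeries.X) * d⁄dX ℚ logOneAdd = 1 := by
  rw [dL_eq, ← onePow_one, onePow_add]
  norm_num
  exact onePow_zero

lemma coeff_L_pow_zero {m k : ℕ} (h : m < k) : PowerSeries.coeff m (logOneAdd ^ k) = 0 := by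
  have := X_pow_dvd_L_pow' (le_refl k)
  exact (PowerSeries.X_pow_dvd_iff.mp this) m h

lemma ode_zero (CC : ℚ⟦X⟧) (M : ℕ) (h0 : PowerSeries.coeff 0 CC = 0)
    (hrel : (1 + PowerSeries.X) * d⁄dX ℚ CC = CC - ((1:ℚ)/(Nat.factorial M)) • logOneAdd ^ M) :
    ∀ m, m ≤ M → PowerSeries.coeff m CC = 0 := by
  intro m
  induction m with
  | zero => intro _; exact h0
  | succ m ih =>
      intro hm
      have hmltM : m < M := hm
      have ihm := ih (Nat.le_of_succ_le hm)
      have hcoeff := congrArg (PowerSeries.coeff m) hrel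
      rw [map_sub, LinearMap.map_smul, smul_eq_mul, coeff_L_pow_zero hmltM, mul_zero, sub_zero,
        ihm] at hcoeff
      have hX : PowerSeries.coeff m (PowerSeries.X * d⁄dX ℚ CC) = 0 := by
        cases m with
        | zero =>
            rw [PowerSeries.coeff_zero_eq_constantCoeff, map_mul]
            simp
        | succ j =>
            rw [PowerSeries.coeff_succ_X_mul, PowerSeries.coeff_derivative, ihm, zero_mul]
      have hexp : (1 + PowerSeries.X) * d⁄dX ℚ CC
          = d⁄dX ℚ CC + PowerSeries.X * d⁄dX ℚ CC := by ring
      rw [hexp, map_add, hX, add_zero, PowerSeries.coeff_derivative] at hcoeff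
      have hne : ((m:ℚ)+1) ≠ 0 := by positivity
      exact (mul_eq_zero.mp hcoeff).resolve_right hne

lemma F1 (M : ℕ) : (PowerSeries.X : ℚ⟦X⟧)^(M+1) ∣ cp (M+1) (PowerSeries.exp ℚ) - (1 + PowerSeries.X) := by
  set A := cp (M+1) (PowerSeries.exp ℚ) with hAdef
  have hA : A = ∑ k ∈ Finset.range (M+1), ((1:ℚ)/(Nat.factorial k)) • logOneAdd ^ k := by
    rw [hAdef, cp_sum]
    refine Finset.sum_congr rfl fun k _ => ?_
    rw [PowerSeries.coeff_exp]
    norm_num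
  set B := ∑ k ∈ Finset.range M, ((1:ℚ)/(Nat.factorial k)) • logOneAdd ^ k with hBdef
  have hAB : A = B + ((1:ℚ)/(Nat.factorial M)) • logOneAdd ^ M := by
    rw [hA, Finset.sum_range_succ]
  have hdA : d⁄dX ℚ A = d⁄dX ℚ logOneAdd * B := by
    rw [hA, map_sum, Finset.sum_range_succ']
    have h0 : d⁄dX ℚ (((1:ℚ)/(Nat.factorial 0)) • logOneAdd ^ 0) = 0 := by
      simp
    rw [h0, add_zero, hBdef, Finset.mul_sum]
    refine Finset.sum_congr rfl fun i _ => ?_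
    rw [Derivation.map_smul]
    have hp : d⁄dX ℚ (logOneAdd ^ (i+1)) = (i+1) • logOneAdd ^ i • d⁄dX ℚ logOneAdd :=
      Derivation.leibniz_pow _ _ (i+1)
    rw [hp, smul_eq_mul, nsmul_eq_mul, PowerSeries.smul_eq_C_mul, PowerSeries.smul_eq_C_mul]
    have hnc : (((i+1 : ℕ)) : ℚ⟦X⟧) = PowerSeries.C ((i+1 : ℕ) : ℚ) := by
      rw [map_natCast]
    have hkey : PowerSeries.C ((1:ℚ)/(Nat.factorial (i+1))) * (((i+1 : ℕ)) : ℚ⟦X⟧)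
        = PowerSeries.C ((1:ℚ)/(Nat.factorial i)) := by
      rw [hnc, ← map_mul]
      congr 1
      rw [Nat.factorial_succ]
      have h1 : ((Nat.factorial i : ℚ)) ≠ 0 := by exact_mod_cast Nat.factorial_ne_zero i
      have h2 : ((i:ℚ)+1) ≠ 0 := by positivity
      push_cast
      field_simp
    calc PowerSeries.C ((1:ℚ)/(Nat.factorial (i+1))) * ((((i+1 : ℕ)) : ℚ⟦X⟧) * (logOneAdd ^ i * d⁄dX ℚ logOneAdd))
        = (PowerSeries.C ((1:ℚ)/(Nat.factorial (i+1))) * (((i+1 : ℕ)) : ℚ⟦X⟧)) * (logOneAdd ^ i * d⁄dX ℚ logOneAdd) := by ring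
      _ = PowerSeries.C ((1:ℚ)/(Nat.factorial i)) * (logOneAdd ^ i * d⁄dX ℚ logOneAdd) := by rw [hkey]
      _ = d⁄dX ℚ logOneAdd * (PowerSeries.C ((1:ℚ)/(Nat.factorial i)) * logOneAdd ^ i) := by ring
  set C := A - (1 + PowerSeries.X) with hCdef
  have hrel : (1 + PowerSeries.X) * d⁄dX ℚ C = C - ((1:ℚ)/(Nat.factorial M)) • logOneAdd ^ M := by
    rw [hCdef, map_sub, mul_sub, hdA, ← mul_assoc, one_add_X_mul_dL, one_mul]
    have : d⁄dX ℚ (1 + PowerSeries.X) = 1 := by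
      rw [map_add, PowerSeries.derivative_X]
      simp
    rw [this, mul_one]
    rw [hAB]
    ring
  have h0A : PowerSeries.coeff 0 A = 1 := by
    rw [hA, map_sum, Finset.sum_eq_single 0]
    · simp
    · intro k _ hk
      rw [LinearMap.map_smul, coeff_L_pow_zero (Nat.pos_of_ne_zero hk), smul_zero]
    · intro h; exact absurd (Finset.mem_range.mpr (Nat.succ_pos M)) h
  have h0 : PowerSeries.coeff 0 C = 0 := by
    rw [hCdef, map_sub, h0A, map_add]
    simp
  have hzero := ode_zero C M h0 hrel
  rw [PowerSeries.X_pow_dvd_iff]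
  intro m hm
  exact hzero m (Nat.lt_succ_iff.mp hm)

lemma onePow_nat (j : ℕ) : onePow (j : ℚ) = (1 + PowerSeries.X) ^ j := by
  induction j with
  | zero => rw [Nat.cast_zero, onePow_zero, pow_zero]
  | succ j ih =>
      rw [pow_succ, ← ih, ← onePow_one, onePow_add]
      push_cast
      ring_nf

lemma F2_nat (M : ℕ) (j : ℕ) :
    (PowerSeries.X : ℚ⟦X⟧)^(M+1) ∣ cp (M+1) (expX (j:ℚ)) - onePow (j:ℚ) := by
  have h1 := cp_pow (M+1) (PowerSeries.exp ℚ) j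
  have h2 : (PowerSeries.X : ℚ⟦X⟧)^(M+1) ∣ (cp (M+1) (PowerSeries.exp ℚ))^j - (1 + PowerSeries.X)^j :=
    dvd_trans (F1 M) (sub_dvd_pow_sub_pow _ _ j)
  rw [expX_nat, onePow_nat]
  have hsplit : cp (M+1) ((PowerSeries.exp ℚ)^j) - (1 + PowerSeries.X)^j
      = (cp (M+1) ((PowerSeries.exp ℚ)^j) - (cp (M+1) (PowerSeries.exp ℚ))^j)
        + ((cp (M+1) (PowerSeries.exp ℚ))^j - (1 + PowerSeries.X)^j) := by ring
  rw [hsplit]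
  exact dvd_add h1 h2

lemma coeff_cp_expX (N : ℕ) (y : ℚ) (m : ℕ) :
    PowerSeries.coeff m (cp N (expX y))
      = ∑ k ∈ Finset.range N, (y^k / (Nat.factorial k : ℚ)) * PowerSeries.coeff m (logOneAdd ^ k) := by
  rw [cp_sum, map_sum]
  refine Finset.sum_congr rfl fun k _ => ?_
  rw [LinearMap.map_smul, expX, coeff_mk, smul_eq_mul]

lemma F2 (M : ℕ) (y : ℚ) :
    (PowerSeries.X : ℚ⟦X⟧)^(M+1) ∣ cp (M+1) (expX y) - onePow y := by
  set N := M + 1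
  rw [PowerSeries.X_pow_dvd_iff]
  intro m hm
  rw [map_sub, sub_eq_zero]
  set q : Polynomial ℚ := ∑ k ∈ Finset.range N,
    Polynomial.C (PowerSeries.coeff m (logOneAdd ^ k) / (Nat.factorial k : ℚ)) * Polynomial.X ^ k with hq
  set p : Polynomial ℚ := Polynomial.C ((1:ℚ) / (Nat.factorial m : ℚ))
      * ∏ i ∈ Finset.range m, (Polynomial.X - Polynomial.C (i:ℚ)) with hp
  have hqeval : ∀ z : ℚ, q.eval z = PowerSeries.coeff m (cp N (expX z)) := by
    intro z
    rw [coeff_cp_expX, hq, Polynomial.eval_finset_sum]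
    refine Finset.sum_congr rfl fun k _ => ?_
    rw [Polynomial.eval_mul, Polynomial.eval_C, Polynomial.eval_pow, Polynomial.eval_X]
    ring
  have hpeval : ∀ z : ℚ, p.eval z = PowerSeries.coeff m (onePow z) := by
    intro z
    rw [hp, Polynomial.eval_mul, Polynomial.eval_C, Polynomial.eval_prod, onePow, coeff_mk]
    have hpr : ∏ i ∈ Finset.range m, Polynomial.eval z (Polynomial.X - Polynomial.C (i:ℚ))
        = ∏ i ∈ Finset.range m, (z - (i:ℚ)) := by
      refine Finset.prod_congr rfl fun i _ => ?_
      rw [Polynomial.eval_sub, Polynomial.eval_X, Polynomial.eval_C]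
    rw [hpr]
    ring
  have hroot : ∀ j : ℕ, (q - p).eval ((j:ℚ)) = 0 := by
    intro j
    rw [Polynomial.eval_sub, hqeval, hpeval, sub_eq_zero]
    have h := PowerSeries.X_pow_dvd_iff.mp (F2_nat M j) m hm
    rw [map_sub] at h
    exact sub_eq_zero.mp h
  have hzero : q - p = 0 := by
    apply Polynomial.eq_zero_of_infinite_isRoot
    apply Set.infinite_of_injective_forall_mem (f := fun j : ℕ => (j:ℚ))
      (hi := fun a b h => Nat.cast_injective h)
    intro j
    exact hroot j
  have : q.eval y = p.eval y := by
    have := congrArg (Polynomial.eval y) hzero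
    rw [Polynomial.eval_sub] at this
    simpa [sub_eq_zero] using this
  rw [← hqeval, ← hpeval, this]

lemma extract (n k : ℕ) (hk : k ≤ n) :
    PowerSeries.coeff n (logOneAdd ^ k * (d⁄dX ℚ logOneAdd * (V ^ (n+1))⁻¹))
      = if k = n then 1 else 0 := by
  have hsplit : logOneAdd ^ k * (d⁄dX ℚ logOneAdd * (V ^ (n+1))⁻¹)
      = PowerSeries.X ^ k * (d⁄dX ℚ logOneAdd * (V ^ ((n-k)+1))⁻¹) := by
    have h1 : V ^ k * (V ^ (n+1))⁻¹ = (V ^ ((n-k)+1))⁻¹ := by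
      have := Vcancel k ((n-k)+1)
      rw [show k + ((n-k)+1) = n + 1 by omega] at this
      exact this
    calc logOneAdd ^ k * (d⁄dX ℚ logOneAdd * (V ^ (n+1))⁻¹)
        = PowerSeries.X ^ k * (d⁄dX ℚ logOneAdd * (V ^ k * (V ^ (n+1))⁻¹)) := by
          rw [L_eq, mul_pow]; ring
      _ = PowerSeries.X ^ k * (d⁄dX ℚ logOneAdd * (V ^ ((n-k)+1))⁻¹) := by rw [h1]
  rw [hsplit]
  have hcoeff : ∀ Z : ℚ⟦X⟧, PowerSeries.coeff n (PowerSeries.X ^ k * Z)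
      = PowerSeries.coeff (n-k) Z := by
    intro Z
    conv_lhs => rw [show n = (n-k) + k from by omega]
    exact PowerSeries.coeff_X_pow_mul Z k (n-k)
  rw [hcoeff, key]
  by_cases h : k = n
  · rw [if_pos h, if_pos (by omega : n - k = 0)]
  · rw [if_neg h, if_neg (by omega : ¬ (n - k = 0))]

lemma extract_big (n k : ℕ) (hk : n < k) (W : ℚ⟦X⟧) :
    PowerSeries.coeff n (logOneAdd ^ k * W) = 0 := by
  have h : (PowerSeries.X : ℚ⟦X⟧)^(n+1) ∣ logOneAdd ^ k * W :=
    Dvd.dvd.mul_right (X_pow_dvd_L_pow' hk) W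
  exact PowerSeries.X_pow_dvd_iff.mp h n (Nat.lt_succ_self n)

end DaeheeAux

open DaeheeAux

theorem daehee2_poly_eq_higher_bernoulli (Dhp : ℕ → ℚ → ℚ) (OB : ℕ → ℚ → ℕ → ℚ)
    (hDhp : ∀ x : ℚ, PowerSeries.mk (fun n => Dhp n x / (Nat.factorial n : ℚ)) * PowerSeries.X * onePow x = (1 + PowerSeries.X) * logOneAdd) (hOB : ∀ (α : ℕ) (x : ℚ), PowerSeries.mk (fun n => OB α x n / (Nat.factorial n : ℚ)) * (PowerSeries.exp ℚ - 1) ^ α = PowerSeries.X ^ α * expX x) :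
    ∀ (n : ℕ) (x : ℚ), Dhp n x = OB (n + 2) (2 - x) n := by
  intro n x
  set y : ℚ := 2 - x with hy
  set α : ℕ := n + 2 with hα
  set N : ℕ := 2*n + 3 with hN
  set M : ℕ := 2*n + 2 with hM
  have hNM : N = M + 1 := by omega
  set Dser : ℚ⟦X⟧ := PowerSeries.mk (fun k => Dhp k x / (Nat.factorial k : ℚ)) with hDser
  set Bser : ℚ⟦X⟧ := PowerSeries.mk (fun k => OB α y k / (Nat.factorial k : ℚ)) with hBser
  have hOBs := hOB α y
  have hDs := hDhp x
  -- Step 1 : Dser = V * onePow (1 - x)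
  have step1 : Dser = V * onePow (1 - x) := by
    have h1 : PowerSeries.X * (Dser * onePow x) = PowerSeries.X * ((1 + PowerSeries.X) * V) := by
      rw [← hDser] at hDs
      calc PowerSeries.X * (Dser * onePow x) = Dser * PowerSeries.X * onePow x := by ring
        _ = (1 + PowerSeries.X) * logOneAdd := hDs
        _ = PowerSeries.X * ((1 + PowerSeries.X) * V) := by rw [L_eq]; ring
    have h2 : Dser * onePow x = (1 + PowerSeries.X) * V :=
      mul_left_cancel₀ PowerSeries.X_ne_zero h1
    have h3 : Dser * (onePow x * onePow (-x)) = (1 + PowerSeries.X) * V * onePow (-x) := by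
      rw [← mul_assoc, h2]
    rw [onePow_add, add_neg_cancel, onePow_zero, mul_one] at h3
    calc Dser = (1 + PowerSeries.X) * V * onePow (-x) := h3
      _ = V * (onePow 1 * onePow (-x)) := by rw [onePow_one]; ring
      _ = V * onePow (1 - x) := by rw [onePow_add, show (1:ℚ) + -x = 1 - x from by ring]
  -- Step 2 : X^(n+1) ∣ cp N Bser - V^α * onePow y
  have step2 : (PowerSeries.X : ℚ⟦X⟧)^(n+1) ∣ cp N Bser - V^α * onePow y := by
    have hN1 : 1 ≤ N := by omega
    have hN2 : 2 ≤ N := by omega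
    set f : ℚ⟦X⟧ := PowerSeries.exp ℚ - 1 with hf
    have cpf : cp N f = cp N (PowerSeries.exp ℚ) - 1 := by
      have : cp N (PowerSeries.exp ℚ) = cp N (f + 1) := by rw [hf]; ring_nf
      rw [this, cp_add, cp_one N hN1]
      ring
    have hfX : (PowerSeries.X : ℚ⟦X⟧)^N ∣ cp N f - PowerSeries.X := by
      have h := F1 M
      rw [← hNM] at h
      rw [cpf]
      have : cp N (PowerSeries.exp ℚ) - 1 - PowerSeries.X
          = cp N (PowerSeries.exp ℚ) - (1 + PowerSeries.X) := by ring
      rw [this]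
      exact h
    have c1 : (PowerSeries.X : ℚ⟦X⟧)^N ∣ cp N (Bser * f^α) - cp N Bser * cp N (f^α) :=
      cp_mul N Bser (f^α)
    have c2 : (PowerSeries.X : ℚ⟦X⟧)^N ∣ cp N (f^α) - (cp N f)^α := cp_pow N f α
    have c3 : (PowerSeries.X : ℚ⟦X⟧)^N ∣ (cp N f)^α - PowerSeries.X^α :=
      dvd_trans hfX (sub_dvd_pow_sub_pow _ _ α)
    have c4 : (PowerSeries.X : ℚ⟦X⟧)^N ∣ cp N (PowerSeries.X^α * expX y)
        - cp N (PowerSeries.X^α) * cp N (expX y) := cp_mul N _ _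
    have c5 : (PowerSeries.X : ℚ⟦X⟧)^N ∣ cp N (PowerSeries.X^α) - logOneAdd^α := by
      have h1 := cp_pow N (PowerSeries.X) α
      rw [cp_X N hN2] at h1
      exact h1
    have c6 : (PowerSeries.X : ℚ⟦X⟧)^N ∣ cp N (expX y) - onePow y := by
      have h := F2 M y
      rw [← hNM] at h
      exact h
    have e0 : Bser * f^α = PowerSeries.X^α * expX y := by
      rw [hBser, hf]; exact hOB α y
    have e1 : cp N (Bser * f^α) = cp N (PowerSeries.X^α * expX y) := congrArg (cp N) e0
    have big : (PowerSeries.X : ℚ⟦X⟧)^N ∣ cp N Bser * PowerSeries.X^α - logOneAdd^α * onePow y := by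
      have hdecomp : cp N Bser * PowerSeries.X^α - logOneAdd^α * onePow y
          = cp N Bser * (PowerSeries.X^α - (cp N f)^α)
            + cp N Bser * ((cp N f)^α - cp N (f^α))
            + (cp N Bser * cp N (f^α) - cp N (Bser * f^α))
            + (cp N (PowerSeries.X^α * expX y) - cp N (PowerSeries.X^α) * cp N (expX y))
            + ((cp N (PowerSeries.X^α) - logOneAdd^α) * cp N (expX y))
            + (logOneAdd^α * (cp N (expX y) - onePow y)) := by
        rw [e1]; ring
      rw [hdecomp]
      refine dvd_add (dvd_add (dvd_add (dvd_add (dvd_add ?_ ?_) ?_) ?_) ?_) ?_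
      · exact Dvd.dvd.mul_left (dvd_sub_comm.mp c3) _
      · exact Dvd.dvd.mul_left (dvd_sub_comm.mp c2) _
      · exact dvd_sub_comm.mp c1
      · exact c4
      · exact Dvd.dvd.mul_right c5 _
      · exact Dvd.dvd.mul_left c6 _
    have hfactor : cp N Bser * PowerSeries.X^α - logOneAdd^α * onePow y
        = (cp N Bser - V^α * onePow y) * PowerSeries.X^α := by
      rw [L_eq, mul_pow]
      ring
    rw [hfactor] at big
    have hXN : (PowerSeries.X : ℚ⟦X⟧)^N = PowerSeries.X^(n+1) * PowerSeries.X^α := by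
      rw [← pow_add]
      congr 1
      omega
    rw [hXN] at big
    exact (mul_dvd_mul_iff_right (pow_ne_zero α (PowerSeries.X_ne_zero : (PowerSeries.X : ℚ⟦X⟧) ≠ 0))).mp big
  -- Step 3 : extract coefficient n
  set W : ℚ⟦X⟧ := d⁄dX ℚ logOneAdd * (V ^ (n+1))⁻¹ with hW
  have hcoeffeq : PowerSeries.coeff n (cp N Bser * W)
      = PowerSeries.coeff n ((V^α * onePow y) * W) := by
    have h := Dvd.dvd.mul_right step2 W
    have h2 := PowerSeries.X_pow_dvd_iff.mp h n (Nat.lt_succ_self n)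
    rw [sub_mul, map_sub] at h2
    exact sub_eq_zero.mp h2
  have hRHS : (V^α * onePow y) * W = Dser := by
    rw [hW, dL_eq, step1]
    calc V^α * onePow y * (onePow (-1) * (V ^ (n+1))⁻¹)
        = (V^(n+1+1) * (V ^ (n+1))⁻¹) * (onePow y * onePow (-1)) := by
          rw [hα, show n+2 = n+1+1 by omega]; ring
      _ = V * onePow (y + -1) := by rw [Vsucc_cancel, onePow_add]
      _ = V * onePow (1 - x) := by rw [show y + -1 = 1 - x from by rw [hy]; ring]
  have hLHS : PowerSeries.coeff n (cp N Bser * W) = OB α y n / (Nat.factorial n : ℚ) := by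
    rw [cp_sum, Finset.sum_mul, map_sum]
    rw [Finset.sum_eq_single n]
    · rw [smul_mul_assoc, LinearMap.map_smul, smul_eq_mul, hW, extract n n (le_refl n),
        if_pos rfl, mul_one, hBser, coeff_mk]
    · intro k hkmem hkne
      rw [smul_mul_assoc, LinearMap.map_smul, smul_eq_mul]
      rcases Nat.lt_or_ge n k with hlt | hge
      · rw [extract_big n k hlt W, mul_zero]
      · have hkle : k ≤ n := hge
        rw [hW, extract n k hkle, if_neg hkne, mul_zero]
    · intro hn
      exfalso
      exact hn (Finset.mem_range.mpr (by omega))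
  have hfinal : OB α y n / (Nat.factorial n : ℚ) = Dhp n x / (Nat.factorial n : ℚ) := by
    rw [← hLHS, hcoeffeq, hRHS, hDser, coeff_mk]
  have hfac : ((Nat.factorial n : ℚ)) ≠ 0 := by exact_mod_cast Nat.factorial_ne_zero n
  field_simp at hfinal
  exact hfinal.symm
end
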